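/- Let Phi satisfy the Restricted Isometry Condition with parameters (4n, eps), 0 < eps < 1. Let v be an n-sparse vector, e a vector in R^N, x = Phi v + e. Let I be an index set with |I| <= 3n and let v_hat be any vector supported in I minimizing ||x - Phi z||_2 over vectors z supported in I. Then ||v_hat - v||_2 <= ((1+eps)/(1-eps)) * ||v restricted to supp(v)\I||_2 + (2/(1-eps)) * ||e||_2. -/

import Mathlib

open scoped BigOperators

noncomputable def l2 {d : ℕ} (v : Fin d → ℝ) : ℝ := Real.sqrt (∑ i, (v i)^2)

noncomputable def l1 {d : ℕ} (v : Fin d → ℝ) : ℝ := ∑ i, |v i|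

noncomputable def linf {d : ℕ} (v : Fin d → ℝ) : ℝ := ⨆ i, |v i|

noncomputable def restrict {d : ℕ} (v : Fin d → ℝ) (T : Finset (Fin d)) : Fin d → ℝ :=
  fun i => if i ∈ T then v i else 0

open Classical in
noncomputable def spt {d : ℕ} (v : Fin d → ℝ) : Finset (Fin d) :=
  Finset.univ.filter (fun i => v i ≠ 0)

def RIC {N d : ℕ} (Φ : Matrix (Fin N) (Fin d) ℝ) (m : ℕ) (ε : ℝ) : Prop :=
  ∀ z : Fin d → ℝ, (spt z).card ≤ m →
    (1 - ε) * l2 z ≤ l2 (Φ.mulVec z) ∧ l2 (Φ.mulVec z) ≤ (1 + ε) * l2 z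

lemma l2_eq_norm {d : ℕ} (a : Fin d → ℝ) :
    l2 a = ‖(WithLp.equiv 2 (Fin d → ℝ)).symm a‖ := by
  simp [l2, EuclideanSpace.norm_eq, Real.norm_eq_abs, sq_abs]

lemma l2_add_le {d : ℕ} (a b : Fin d → ℝ) : l2 (a + b) ≤ l2 a + l2 b := by
  rw [l2_eq_norm, l2_eq_norm, l2_eq_norm]
  exact norm_add_le _ _

lemma l2_nonneg {d : ℕ} (a : Fin d → ℝ) : 0 ≤ l2 a := Real.sqrt_nonneg _

lemma spt_sub_subset {d : ℕ} (a b : Fin d → ℝ) : spt (a - b) ⊆ spt a ∪ spt b := by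
  classical
  intro i hi
  simp only [spt, Finset.mem_filter, Finset.mem_univ, true_and, Finset.mem_union] at hi ⊢
  by_contra h
  push_neg at h
  simp only [Pi.sub_apply, h.1, h.2, sub_zero] at hi
  exact hi rfl

/-- Error bound for the least squares output. -/
theorem stmt7 {N d : ℕ} (Φ : Matrix (Fin N) (Fin d) ℝ) (n : ℕ) (ε : ℝ)
    (hε : 0 < ε) (hε1 : ε < 1) (hRIC : RIC Φ (4 * n) ε)
    (v : Fin d → ℝ) (hv : (spt v).card ≤ n)
    (e : Fin N → ℝ) (x : Fin N → ℝ) (hx : x = Φ.mulVec v + e)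
    (I : Finset (Fin d)) (hI : I.card ≤ 3 * n)
    (vhat : Fin d → ℝ) (hsupp : spt vhat ⊆ I)
    (hmin : ∀ z : Fin d → ℝ, spt z ⊆ I →
      l2 (x - Φ.mulVec vhat) ≤ l2 (x - Φ.mulVec z)) :
    l2 (vhat - v) ≤ ((1 + ε) / (1 - ε)) * l2 (restrict v (spt v \ I))
      + (2 / (1 - ε)) * l2 e := by
  classical
  set w := vhat - v with hw
  set r := restrict v (spt v \ I) with hr
  set z := restrict v I with hz
  -- support of w
  have hwcard : (spt w).card ≤ 4 * n := by
    have h1 : spt w ⊆ I ∪ spt v := by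
      refine (spt_sub_subset vhat v).trans ?_
      exact Finset.union_subset_union hsupp (subset_refl _)
    calc (spt w).card ≤ (I ∪ spt v).card := Finset.card_le_card h1
      _ ≤ I.card + (spt v).card := Finset.card_union_le _ _
      _ ≤ 3 * n + n := add_le_add hI hv
      _ = 4 * n := by ring
  have hlow := (hRIC w hwcard).1
  -- spt z ⊆ I
  have hzI : spt z ⊆ I := by
    intro i hi
    simp only [spt, Finset.mem_filter, Finset.mem_univ, true_and] at hi
    by_contra h
    simp [hz, restrict, h] at hi
  -- v - z = r
  have hvz : v - z = r := by
    funext i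
    simp only [Pi.sub_apply, hz, hr, restrict, spt, Finset.mem_sdiff,
      Finset.mem_filter, Finset.mem_univ, true_and]
    by_cases hiI : i ∈ I
    · simp [hiI]
    · by_cases hvi : v i = 0 <;> simp [hiI, hvi]
  -- spt r ⊆ spt v
  have hrcard : (spt r).card ≤ 4 * n := by
    have h1 : spt r ⊆ spt v := by
      intro i hi
      simp only [spt, Finset.mem_filter, Finset.mem_univ, true_and, hr, restrict] at hi ⊢
      by_contra h
      simp [h] at hi
    have := (Finset.card_le_card h1).trans hv
    omega
  have hrhi := (hRIC r hrcard).2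
  -- algebraic identities
  have hΦw : Φ.mulVec w = e + -(x - Φ.mulVec vhat) := by
    have : Φ.mulVec w = Φ.mulVec vhat - Φ.mulVec v := by
      rw [hw, Matrix.mulVec_sub]
    rw [this, hx]; funext j; simp [Matrix.mulVec]; ring
  have hxz : x - Φ.mulVec z = Φ.mulVec r + e := by
    rw [hx, ← hvz, Matrix.mulVec_sub]
    funext j; simp [Matrix.mulVec]; ring
  have hl2neg : l2 (-(x - Φ.mulVec vhat)) = l2 (x - Φ.mulVec vhat) := by
    unfold l2; congr 1; apply Finset.sum_congr rfl; intro j _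
    simp; ring
  have key : (1 - ε) * l2 w ≤ (1 + ε) * l2 r + 2 * l2 e := by
    have h1 : l2 (Φ.mulVec w) ≤ l2 e + l2 (x - Φ.mulVec vhat) := by
      rw [hΦw]
      exact (l2_add_le _ _).trans (by rw [hl2neg])
    have h2 : l2 (x - Φ.mulVec vhat) ≤ l2 (Φ.mulVec r) + l2 e := by
      refine (hmin z hzI).trans ?_
      rw [hxz]; exact l2_add_le _ _
    linarith
  have h1ε : (0:ℝ) < 1 - ε := by linarith
  rw [div_mul_eq_mul_div, div_mul_eq_mul_div, ← add_div, le_div_iff₀ h1ε]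
  linarith
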